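/- arXiv:1410.0979 — 2 statements merged into one kernel-verified Lean document; each statement's English description precedes it below -/
import Mathlib

section
/- For each integer k ≥ 1, the limit as p → 0⁺ of the loss L(k,p) = E(k,p) - min_{j ≥ 1} E(j,p) equals 1/k. -/
open Real Set Filter

/-- Expected number of tests per person in the Dorfman two-stage procedure
with group size `k` and prevalence `p`: `E 1 p = 1` and
`E k p = 1 - (1-p)^k + 1/k` for `k ≥ 2`. -/
noncomputable def E (k : ℕ) (p : ℝ) : ℝ :=
  if k = 1 then 1 else 1 - (1 - p) ^ k + 1 / k

/-- Optimal expected number of tests per person: infimum over group sizes `k ≥ 1`. -/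
noncomputable def Estar (p : ℝ) : ℝ := ⨅ k : ℕ+, E k p

/-- Loss of using group size `k` at prevalence `p`. -/
noncomputable def L (k : ℕ) (p : ℝ) : ℝ := E k p - Estar p

lemma E_nonneg {j : ℕ} {p : ℝ} (hp0 : 0 < p) (hp1 : p < 1) : 0 ≤ E j p := by
  unfold E
  split
  · norm_num
  · have h1 : (1 - p) ^ j ≤ 1 := by
      apply pow_le_one₀ <;> linarith
    have h2 : (0:ℝ) ≤ 1 / j := by positivity
    linarith

lemma tendsto_Estar : Tendsto Estar (nhdsWithin 0 (Set.Ioi 0)) (nhds 0) := by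
  rw [Metric.tendsto_nhdsWithin_nhds]
  intro ε hε
  set N : ℕ := ⌈2/ε⌉₊ + 2 with hN
  have hN2 : (N:ℝ) > 2/ε := by
    have := Nat.le_ceil (2/ε)
    push_cast [hN]
    linarith
  have hNpos : (0:ℝ) < N := lt_of_le_of_lt (by positivity) hN2
  have hNinv : 1 / (N:ℝ) < ε / 2 := by
    rw [div_lt_div_iff₀ hNpos (by norm_num)]
    rw [gt_iff_lt, div_lt_iff₀ hε] at hN2
    linarith
  refine ⟨min (ε/(2*N)) 1, by positivity, ?_⟩
  intro p hp hd
  rw [Real.dist_eq, sub_zero, abs_lt] at hd ⊢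
  have hp0 : 0 < p := hp
  have hpd1 : p < 1 := lt_of_lt_of_le hd.2 (min_le_right _ _)
  have hpd2 : p < ε/(2*N) := lt_of_lt_of_le hd.2 (min_le_left _ _)
  have hbdd : BddBelow (Set.range fun j : ℕ+ => E j p) := by
    refine ⟨0, ?_⟩
    rintro x ⟨j, rfl⟩
    exact E_nonneg hp0 hpd1
  constructor
  · have h0 : 0 ≤ Estar p := Real.iInf_nonneg fun j => E_nonneg hp0 hpd1
    linarith
  · have hle : Estar p ≤ E (⟨N, by omega⟩ : ℕ+) p := ciInf_le hbdd _
    have hEN : E N p = 1 - (1 - p) ^ N + 1 / N := by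
      unfold E; rw [if_neg (by omega)]
    have hbern : 1 - (N:ℝ) * p ≤ (1 - p) ^ N := by
      have h := one_add_mul_le_pow (a := -p) (by linarith) N
      have he : (1:ℝ) + -p = 1 - p := by ring
      rw [he] at h
      linarith
    have hNp : (N:ℝ) * p < ε / 2 := by
      rw [lt_div_iff₀ (by positivity : (0:ℝ) < 2 * N)] at hpd2
      nlinarith
    have : E N p ≤ (N:ℝ) * p + 1 / N := by rw [hEN]; linarith
    calc Estar p ≤ E N p := hle
      _ ≤ (N:ℝ) * p + 1 / N := this
      _ < ε / 2 + ε / 2 := by linarith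
      _ = ε := by ring

theorem loss_limit_at_zero (k : ℕ) (hk : 1 ≤ k) :
    Filter.Tendsto (fun p => L k p) (nhdsWithin 0 (Set.Ioi 0)) (nhds (1 / k)) := by
  have h1 : Tendsto (fun p => E k p) (nhdsWithin 0 (Set.Ioi 0)) (nhds (1 / k)) := by
    by_cases hk1 : k = 1
    · subst hk1
      simp only [E, if_pos rfl]
      norm_num
    · have hc : Tendsto (fun p : ℝ => 1 - (1 - p) ^ k + 1 / k) (nhds 0)
          (nhds (1 - (1 - 0) ^ k + 1 / k)) := by
        apply Continuous.tendsto
        continuity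
      simp only [sub_zero, one_pow, sub_self, zero_add] at hc
      have := hc.mono_left (nhdsWithin_le_nhds (s := Set.Ioi (0:ℝ)))
      simpa only [E, if_neg hk1] using this
  have := h1.sub tendsto_Estar
  simpa [L] using this
end

section
/- If q₈* denotes the larger root in (0,1) of q^8(1-q) = 1/72 and q₇* the larger root in (0,1) of q^7(1-q) = 1/56, then q₇* < q₈*, and for every p with 1 - q₈* < p < 1 - q₇* the optimal Dorfman group size is exactly 8. -/
open Real Set Filter

private lemma f7_anti : StrictAntiOn (fun q : ℝ => q^7*(1-q)) (Set.Icc (7/8 : ℝ) 1) := by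
  apply strictAntiOn_of_deriv_neg (convex_Icc _ _)
  · exact ((continuous_pow 7).mul (continuous_const.sub continuous_id)).continuousOn
  · intro x hx
    rw [interior_Icc, Set.mem_Ioo] at hx
    have hd : HasDerivAt (fun q : ℝ => q^7*(1-q)) (7*x^6*(1-x) + x^7*(-1)) x := by
      have h1 : HasDerivAt (fun q : ℝ => q^7) (7*x^6) x := by
        simpa using hasDerivAt_pow 7 x
      have h2 : HasDerivAt (fun q : ℝ => 1-q) (-1) x := by
        simpa using (hasDerivAt_id x).const_sub 1
      exact (h1.mul h2).congr_deriv (by ring)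
    rw [hd.deriv]
    have hx6 : (0:ℝ) < x^6 := pow_pos (by linarith [hx.1]) 6
    nlinarith [mul_pos hx6 (show (0:ℝ) < 8*x-7 by linarith [hx.1])]

private lemma f8_anti : StrictAntiOn (fun q : ℝ => q^8*(1-q)) (Set.Icc (8/9 : ℝ) 1) := by
  apply strictAntiOn_of_deriv_neg (convex_Icc _ _)
  · exact ((continuous_pow 8).mul (continuous_const.sub continuous_id)).continuousOn
  · intro x hx
    rw [interior_Icc, Set.mem_Ioo] at hx
    have hd : HasDerivAt (fun q : ℝ => q^8*(1-q)) (8*x^7*(1-x) + x^8*(-1)) x := by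
      have h1 : HasDerivAt (fun q : ℝ => q^8) (8*x^7) x := by
        simpa using hasDerivAt_pow 8 x
      have h2 : HasDerivAt (fun q : ℝ => 1-q) (-1) x := by
        simpa using (hasDerivAt_id x).const_sub 1
      exact (h1.mul h2).congr_deriv (by ring)
    rw [hd.deriv]
    have hx7 : (0:ℝ) < x^7 := pow_pos (by linarith [hx.1]) 7
    nlinarith [mul_pos hx7 (show (0:ℝ) < 9*x-8 by linarith [hx.1])]

private lemma E_eq (k : ℕ) (hk : 2 ≤ k) (p : ℝ) : E k p = 1 - (1-p)^k + 1/(k:ℝ) := by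
  rw [E, if_neg (by omega)]

private lemma Ediff (p : ℝ) (l : ℕ) (hl : 2 ≤ l) :
    E (l+1) p - E l p = (1-p)^l*(1-(1-p)) - 1/((l:ℝ)*((l:ℝ)+1)) := by
  rw [E_eq l hl, E_eq (l+1) (by omega)]
  have h3 : (l:ℝ) ≠ 0 := Nat.cast_ne_zero.2 (by omega)
  have h4 : ((l:ℝ)+1) ≠ 0 := by positivity
  push_cast
  field_simp
  ring

private lemma helper_dn (q c : ℝ) (hq89 : 8/9 < q) (hq1 : q < 1) (m l : ℕ) (hml : m + l = 7)
    (h7 : q^7*(1-q) < 1/56) (hc : 1 ≤ 56*c*(8/9:ℝ)^m) : q^l*(1-q) < c := by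
  have h7' : q^(m+l)*(1-q) < 1/56 := by rw [hml]; exact h7
  have hq0 : (0:ℝ) < q := by linarith
  have hmle : (8/9:ℝ)^m ≤ q^m := pow_le_pow_left₀ (by norm_num) hq89.le m
  have h0 : (0:ℝ) ≤ q^l*(1-q) := mul_nonneg (pow_nonneg hq0.le l) (by linarith)
  have h3 : (0:ℝ) < (8/9:ℝ)^m := by positivity
  have h2 : (8/9:ℝ)^m * (q^l*(1-q)) < 1/56 := by
    calc (8/9:ℝ)^m * (q^l*(1-q)) ≤ q^m * (q^l*(1-q)) := mul_le_mul_of_nonneg_right hmle h0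
      _ = q^(m+l)*(1-q) := by ring
      _ < 1/56 := h7'
  nlinarith [h2, hc, h3, h0]

private lemma step_up_final (q : ℝ) (hq89 : 8/9 < q) (hq1 : q < 1) (hB : 1/72 < q^8*(1-q))
    (l : ℕ) (h8l : 8 ≤ l) (hl22 : l ≤ 22) : 1/((l:ℝ)*((l:ℝ)+1)) < q^l*(1-q) := by
  obtain ⟨n, rfl⟩ : ∃ n, l = n + 8 := ⟨l - 8, by omega⟩
  have hn : n ≤ 14 := by omega
  have hq0 : (0:ℝ) < q := by linarith
  have hkey : (72:ℝ) ≤ (8/9)^n * (((n:ℝ)+8)*((n:ℝ)+9)) := by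
    interval_cases n <;> norm_num
  have hmle : (8/9:ℝ)^n ≤ q^n := pow_le_pow_left₀ (by norm_num) hq89.le n
  have hX : (0:ℝ) < ((n:ℝ)+8)*((n:ℝ)+8+1) := by positivity
  push_cast
  have h5 : 1/(((n:ℝ)+8)*((n:ℝ)+8+1)) ≤ (8/9:ℝ)^n * (1/72) := by
    rw [div_le_iff₀ hX]
    nlinarith [hkey]
  have h2 : (8/9:ℝ)^n * (1/72) < q^n * (q^8*(1-q)) := by
    have ha := mul_lt_mul_of_pos_left hB (pow_pos hq0 n)
    nlinarith [hmle]
  calc 1/(((n:ℝ)+8)*((n:ℝ)+8+1)) ≤ (8/9:ℝ)^n * (1/72) := h5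
    _ < q^n * (q^8*(1-q)) := h2
    _ = q^(n+8)*(1-q) := by ring

set_option maxHeartbeats 2000000 in
theorem optimality_range_of_eight (q7 q8 : ℝ)
    (hq8 : q8 ∈ Set.Ioo (0:ℝ) 1) (hq8root : q8 ^ 8 * (1 - q8) = 1 / 72)
    (hq8max : ∀ q ∈ Set.Ioo (0:ℝ) 1, q ^ 8 * (1 - q) = 1 / 72 → q ≤ q8)
    (hq7 : q7 ∈ Set.Ioo (0:ℝ) 1) (hq7root : q7 ^ 7 * (1 - q7) = 1 / 56)
    (hq7max : ∀ q ∈ Set.Ioo (0:ℝ) 1, q ^ 7 * (1 - q) = 1 / 56 → q ≤ q7) :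
    q7 < q8 ∧
    ∀ p : ℝ, 1 - q8 < p → p < 1 - q7 →
      ∀ k : ℕ, 1 ≤ k → (E 8 p ≤ E k p ∧ (k ≠ 8 → E 8 p < E k p)) := by
  obtain ⟨hq70, hq71⟩ := hq7
  obtain ⟨hq80, hq81⟩ := hq8
  have hq7lo : (979/1000 : ℝ) < q7 := by
    have himg : (1/56 : ℝ) ∈ (fun x : ℝ => x^7*(1-x)) '' Set.Ioo (979/1000) 1 :=
      intermediate_value_Ioo' (by norm_num)
        ((continuous_pow 7).mul (continuous_const.sub continuous_id)).continuousOn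
        ⟨by norm_num, by norm_num⟩
    obtain ⟨x, hx, hfx⟩ := himg
    have hle := hq7max x ⟨by linarith [hx.1], hx.2⟩ hfx
    linarith [hx.1]
  have hq8lo : (8/9 : ℝ) < q8 := by
    have himg : (1/72 : ℝ) ∈ (fun x : ℝ => x^8*(1-x)) '' Set.Ioo (8/9) (197/200) :=
      intermediate_value_Ioo' (by norm_num)
        ((continuous_pow 8).mul (continuous_const.sub continuous_id)).continuousOn
        ⟨by norm_num, by norm_num⟩
    obtain ⟨x, hx, hfx⟩ := himg
    have hle := hq8max x ⟨by linarith [hx.1], by linarith [hx.2]⟩ hfx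
    linarith [hx.1]
  have hf7q7 : 1/72 < q7^8*(1-q7) := by
    have h : q7^8*(1-q7) = q7 * (q7^7*(1-q7)) := by ring
    rw [h, hq7root]; linarith
  have hq78 : q7 < q8 := by
    by_contra hcon
    push_neg at hcon
    rcases eq_or_lt_of_le hcon with heq | hlt
    · rw [heq] at hq8root; linarith
    · have hh := f8_anti ⟨hq8lo.le, hq81.le⟩ ⟨by linarith, hq71.le⟩ hlt
      simp only [] at hh
      rw [hq8root] at hh; linarith
  have hq8hi : q8 < 197/200 := by
    by_contra hcon
    push_neg at hcon
    rcases eq_or_lt_of_le hcon with heq | hlt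
    · rw [← heq] at hq8root; norm_num at hq8root
    · have hh := f8_anti ⟨by norm_num, by norm_num⟩ ⟨hq8lo.le, hq81.le⟩ hlt
      simp only [] at hh
      rw [hq8root] at hh
      norm_num at hh
  refine ⟨hq78, ?_⟩
  intro p hp1 hp2 k hk
  have hq979 : (979/1000 : ℝ) < 1 - p := by linarith
  have hq89 : (8/9 : ℝ) < 1 - p := by linarith
  have hq1 : (1:ℝ) - p < 1 := by linarith
  have hqhi : (1:ℝ) - p < 197/200 := by linarith
  have hq0 : (0:ℝ) < 1 - p := by linarith
  have hA : (1-p)^7*(1-(1-p)) < 1/56 := by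
    have hh := f7_anti ⟨by linarith, hq71.le⟩ ⟨by linarith, by linarith⟩
      (show q7 < 1 - p by linarith)
    simp only [] at hh
    rw [hq7root] at hh
    exact hh
  have hB : (1/72 : ℝ) < (1-p)^8*(1-(1-p)) := by
    have hh := f8_anti ⟨by linarith, by linarith⟩ ⟨hq8lo.le, hq81.le⟩
      (show 1 - p < q8 by linarith)
    simp only [] at hh
    rw [hq8root] at hh
    exact hh
  have hd6 : (1-p)^6*(1-(1-p)) < 1/42 := helper_dn _ _ hq89 hq1 1 6 (by norm_num) hA (by norm_num)
  have hd5 : (1-p)^5*(1-(1-p)) < 1/30 := helper_dn _ _ hq89 hq1 2 5 (by norm_num) hA (by norm_num)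
  have hd4 : (1-p)^4*(1-(1-p)) < 1/20 := helper_dn _ _ hq89 hq1 3 4 (by norm_num) hA (by norm_num)
  have hd3 : (1-p)^3*(1-(1-p)) < 1/12 := helper_dn _ _ hq89 hq1 4 3 (by norm_num) hA (by norm_num)
  have hd2 : (1-p)^2*(1-(1-p)) < 1/6 := helper_dn _ _ hq89 hq1 5 2 (by norm_num) hA (by norm_num)
  have e87 : E 8 p < E 7 p := by
    rw [E_eq 8 (by norm_num), E_eq 7 (by norm_num)]
    push_cast
    linarith [hA]
  have e76 : E 7 p < E 6 p := by
    rw [E_eq 7 (by norm_num), E_eq 6 (by norm_num)]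
    push_cast
    linarith [hd6]
  have e65 : E 6 p < E 5 p := by
    rw [E_eq 6 (by norm_num), E_eq 5 (by norm_num)]
    push_cast
    linarith [hd5]
  have e54 : E 5 p < E 4 p := by
    rw [E_eq 5 (by norm_num), E_eq 4 (by norm_num)]
    push_cast
    linarith [hd4]
  have e43 : E 4 p < E 3 p := by
    rw [E_eq 4 (by norm_num), E_eq 3 (by norm_num)]
    push_cast
    linarith [hd3]
  have e32 : E 3 p < E 2 p := by
    rw [E_eq 3 (by norm_num), E_eq 2 (by norm_num)]
    push_cast
    linarith [hd2]
  have e81 : E 8 p < E 1 p := by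
    have hE1 : E 1 p = 1 := by simp [E]
    rw [E_eq 8 (by norm_num), hE1]
    have hp8 : (979/1000:ℝ)^8 < (1-p)^8 := by
      apply pow_lt_pow_left₀ hq979 (by norm_num) (by norm_num)
    have h18 : (1/8:ℝ) < (979/1000:ℝ)^8 := by norm_num
    push_cast
    linarith
  have claim : ∀ n : ℕ, n ≤ 14 → E 8 p < E (n + 9) p := by
    intro n
    induction n with
    | zero =>
      intro _
      have hd := Ediff p 8 (by norm_num)
      have hs := step_up_final (1-p) hq89 hq1 hB 8 (by norm_num) (by norm_num)
      norm_num at hd hs ⊢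
      linarith
    | succ m ih =>
      intro hm
      have h1 := ih (by omega)
      have hd := Ediff p (m+9) (by omega)
      have hs := step_up_final (1-p) hq89 hq1 hB (m+9) (by omega) (by omega)
      have heq : m + 1 + 9 = (m + 9) + 1 := by omega
      rw [heq]
      linarith
  have hbig : ∀ k : ℕ, 9 ≤ k → E 8 p < E k p := by
    intro k hk9
    by_cases hk23 : k ≤ 23
    · obtain ⟨n, rfl⟩ : ∃ n, k = n + 9 := ⟨k - 9, by omega⟩
      exact claim n (by omega)
    · push_neg at hk23
      rw [E_eq 8 (by norm_num), E_eq k (by omega)]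
      have h1 : (1-p)^k ≤ (1-p)^23 := pow_le_pow_of_le_one hq0.le (by linarith) (by omega)
      have h2 : (1-p)^23 < (197/200:ℝ)^23 := by
        apply pow_lt_pow_left₀ hqhi hq0.le (by norm_num)
      have h3 : (979/1000:ℝ)^8 < (1-p)^8 := by
        apply pow_lt_pow_left₀ hq979 (by norm_num) (by norm_num)
      have h4 : (0:ℝ) < 1/(k:ℝ) := by
        have : (0:ℝ) < (k:ℝ) := by exact_mod_cast Nat.pos_of_ne_zero (by omega)
        positivity
      have h5 : (0:ℝ) < (979/1000:ℝ)^8 - (197/200)^23 - 1/8 := by norm_num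
      push_cast
      linarith
  have hlt : k ≠ 8 → E 8 p < E k p := by
    intro hne
    rcases Nat.lt_or_ge k 9 with h9 | h9
    · interval_cases k
      · exact e81
      · linarith
      · linarith
      · linarith
      · linarith
      · linarith
      · linarith
      · exact absurd rfl hne
    · exact hbig k h9
  refine ⟨?_, hlt⟩
  rcases eq_or_ne k 8 with rfl | hne
  · exact le_refl _
  · exact (hlt hne).le
end
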